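/- Let S be a finite set of positive integers with j = max(S), and let ‖·‖ be a submultiplicative matrix norm on d×d complex matrices. Let {A_n} satisfy A_n = ∏_{k ∈ S} A_{n−k} for n ≥ j (product in any fixed order). Then for all n ≥ j, ‖A_n‖ ≤ ∏_{k=0}^{j−1} ‖A_k‖^{m_{k,n}}, where m_{k,n} = ∑_{ℓ ∈ S, ℓ ≥ j−k} F^{(S)}_{n+j−1−k−ℓ}. -/

import Mathlib

theorem stmt_8 (d : ℕ) (S : Finset ℕ) (hS : S.Nonempty) (hpos : ∀ ℓ ∈ S, 0 < ℓ)
    (ν : Matrix (Fin d) (Fin d) ℂ → ℝ)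
    (hν0 : ∀ X, 0 ≤ ν X)
    (hνadd : ∀ X Y, ν (X + Y) ≤ ν X + ν Y)
    (hνsmul : ∀ (c : ℂ) (X), ν (c • X) = ‖c‖ * ν X)
    (hνeq : ∀ X, ν X = 0 ↔ X = 0)
    (hνmul : ∀ X Y, ν (X * Y) ≤ ν X * ν Y)
    (A : ℕ → Matrix (Fin d) (Fin d) ℂ)
    (hA : ∀ n ≥ S.max' hS, ∃ l : List (Matrix (Fin d) (Fin d) ℂ),
      (l : Multiset (Matrix (Fin d) (Fin d) ℂ)) = S.val.map (fun k => A (n - k)) ∧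
      A n = l.prod)
    (F : ℕ → ℕ)
    (hF0 : ∀ n < S.max' hS - 1, F n = 0)
    (hF1 : F (S.max' hS - 1) = 1)
    (hFrec : ∀ n ≥ S.max' hS, F n = ∑ ℓ ∈ S, F (n - ℓ)) :
    ∀ n ≥ S.max' hS,
      ν (A n) ≤ ∏ k ∈ Finset.range (S.max' hS),
        ν (A k) ^ (∑ ℓ ∈ S.filter (fun ℓ => S.max' hS - k ≤ ℓ),
          F (n + S.max' hS - 1 - k - ℓ)) := by
  set j := S.max' hS with hj
  have hjS : j ∈ S := S.max'_mem hS
  have hj1 : 1 ≤ j := hpos j hjS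
  have hle : ∀ ℓ ∈ S, ℓ ≤ j := fun ℓ h => S.le_max' ℓ h
  set E : ℕ → ℕ → ℕ := fun k n => if n < j then (if k = n then 1 else 0)
      else ∑ ℓ ∈ S.filter (fun ℓ => j - k ≤ ℓ), F (n + j - 1 - k - ℓ) with hE
  -- crux per-term lemma
  have crux : ∀ n k ℓ', j ≤ n → k < j → ℓ' ∈ S → j - k ≤ ℓ' →
      F (n + j - 1 - k - ℓ') =
        (∑ ℓ ∈ S.filter (fun ℓ => ℓ ≤ n - j), F (n + j - 1 - k - ℓ' - ℓ)) +
        (if ℓ' = n - k then 1 else 0) := by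
    intro n k ℓ' hn hk hℓ'S hℓ'k
    have hℓ'j : ℓ' ≤ j := hle ℓ' hℓ'S
    have hℓ'1 : 1 ≤ ℓ' := hpos ℓ' hℓ'S
    by_cases hc : j ≤ n + j - 1 - k - ℓ'
    · -- recurrence case
      have hne : ℓ' ≠ n - k := by omega
      rw [if_neg hne, add_zero, hFrec _ hc]
      rw [← Finset.sum_filter_add_sum_filter_not S (fun ℓ => ℓ ≤ n - j)]
      have h2 : ∑ ℓ ∈ S.filter (fun ℓ => ¬ ℓ ≤ n - j), F (n + j - 1 - k - ℓ' - ℓ) = 0 := by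
        apply Finset.sum_eq_zero
        intro ℓ hℓ
        simp only [Finset.mem_filter] at hℓ
        have h1 : 1 ≤ ℓ := hpos ℓ hℓ.1
        have h2 : ℓ ≤ j := hle ℓ hℓ.1
        exact hF0 _ (by omega)
      rw [h2, add_zero]
    · -- small index case
      push_neg at hc
      by_cases he : ℓ' = n - k
      · rw [if_pos he]
        have hm : n + j - 1 - k - ℓ' = j - 1 := by omega
        rw [hm, hF1]
        have h2 : ∑ ℓ ∈ S.filter (fun ℓ => ℓ ≤ n - j), F (j - 1 - ℓ) = 0 := by
          apply Finset.sum_eq_zero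
          intro ℓ hℓ
          simp only [Finset.mem_filter] at hℓ
          have h1 : 1 ≤ ℓ := hpos ℓ hℓ.1
          exact hF0 _ (by omega)
        rw [h2]
      · rw [if_neg he, add_zero]
        have hm : n + j - 1 - k - ℓ' < j - 1 := by omega
        rw [hF0 _ hm]
        symm
        apply Finset.sum_eq_zero
        intro ℓ hℓ
        simp only [Finset.mem_filter] at hℓ
        have h1 : 1 ≤ ℓ := hpos ℓ hℓ.1
        exact hF0 _ (by omega)
  -- key identity
  have key : ∀ n, j ≤ n → ∀ k, k < j →
      (∑ ℓ' ∈ S.filter (fun ℓ => j - k ≤ ℓ), F (n + j - 1 - k - ℓ')) =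
        ∑ ℓ ∈ S, E k (n - ℓ) := by
    intro n hn k hk
    rw [← Finset.sum_filter_add_sum_filter_not S (fun ℓ => ℓ ≤ n - j)]
    have hR1 : ∑ ℓ ∈ S.filter (fun ℓ => ℓ ≤ n - j), E k (n - ℓ)
        = ∑ ℓ ∈ S.filter (fun ℓ => ℓ ≤ n - j),
            ∑ ℓ' ∈ S.filter (fun ℓ => j - k ≤ ℓ), F (n + j - 1 - k - ℓ' - ℓ) := by
      apply Finset.sum_congr rfl
      intro ℓ hℓ
      simp only [Finset.mem_filter] at hℓ
      have h1 : 1 ≤ ℓ := hpos ℓ hℓ.1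
      have hnℓ : ¬ (n - ℓ < j) := by omega
      rw [hE]
      simp only [if_neg hnℓ]
      apply Finset.sum_congr rfl
      intro ℓ' hℓ'
      simp only [Finset.mem_filter] at hℓ'
      congr 1
      omega
    have hR2 : ∑ ℓ ∈ S.filter (fun ℓ => ¬ ℓ ≤ n - j), E k (n - ℓ)
        = if n - k ∈ S then 1 else 0 := by
      have : ∀ ℓ ∈ S.filter (fun ℓ => ¬ ℓ ≤ n - j), E k (n - ℓ)
          = if ℓ = n - k then 1 else 0 := by
        intro ℓ hℓ
        simp only [Finset.mem_filter] at hℓ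
        have h1 : 1 ≤ ℓ := hpos ℓ hℓ.1
        have h2 : ℓ ≤ j := hle ℓ hℓ.1
        have hnℓ : n - ℓ < j := by omega
        rw [hE]
        simp only [if_pos hnℓ]
        by_cases he : ℓ = n - k
        · rw [if_pos he, if_pos (by omega)]
        · rw [if_neg he, if_neg (by omega)]
      rw [Finset.sum_congr rfl this, Finset.sum_ite_eq' _ (n - k)]
      by_cases hm : n - k ∈ S
      · rw [if_pos hm, if_pos (by simp [Finset.mem_filter, hm]; omega)]
      · rw [if_neg hm, if_neg (by simp [Finset.mem_filter, hm])]
    rw [hR1, hR2]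
    rw [Finset.sum_congr rfl (fun ℓ' hℓ' => by
      simp only [Finset.mem_filter] at hℓ'
      exact crux n k ℓ' hn hk hℓ'.1 hℓ'.2)]
    rw [Finset.sum_add_distrib, Finset.sum_comm]
    congr 1
    rw [Finset.sum_ite_eq' _ (n - k)]
    by_cases hm : n - k ∈ S
    · rw [if_pos (by simp [Finset.mem_filter, hm]; omega), if_pos hm]
    · rw [if_neg (by simp [Finset.mem_filter, hm]), if_neg hm]
  -- norm of list product
  have νlist : ∀ l : List (Matrix (Fin d) (Fin d) ℂ), l ≠ [] →
      ν l.prod ≤ (l.map ν).prod := by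
    intro l
    induction l with
    | nil => intro h; exact absurd rfl h
    | cons x t ih =>
      intro _
      cases t with
      | nil => simp
      | cons y s =>
        rw [List.prod_cons, List.map_cons, List.prod_cons]
        calc ν (x * (y :: s).prod) ≤ ν x * ν ((y :: s).prod) := hνmul _ _
          _ ≤ ν x * ((y :: s).map ν).prod :=
            mul_le_mul_of_nonneg_left (ih (by simp)) (hν0 x)
  -- main bound for all n
  have main : ∀ n, ν (A n) ≤ ∏ k ∈ Finset.range j, ν (A k) ^ E k n := by
    intro n
    induction n using Nat.strong_induction_on with
    | _ n ih =>
      by_cases hn : n < j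
      · have hprod : ∏ k ∈ Finset.range j, ν (A k) ^ E k n = ν (A n) := by
          rw [hE]
          simp only [if_pos hn]
          rw [Finset.prod_eq_single_of_mem n (Finset.mem_range.2 hn)]
          · simp
          · intro b _ hb
            simp [hb]
        rw [hprod]
      · push_neg at hn
        obtain ⟨l, hl, hAn⟩ := hA n hn
        have hlne : l ≠ [] := by
          intro h
          subst h
          have := congrArg Multiset.card hl
          simp at this
          exact absurd this.symm (Finset.card_ne_zero_of_mem hjS)
        calc ν (A n) = ν l.prod := by rw [hAn]
          _ ≤ (l.map ν).prod := νlist l hlne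
          _ = ∏ ℓ ∈ S, ν (A (n - ℓ)) := by
              have h1 : ((l.map ν : List ℝ) : Multiset ℝ) = S.val.map (fun k => ν (A (n - k))) := by
                rw [← Multiset.map_coe, hl, Multiset.map_map]
                rfl
              calc (l.map ν).prod = ((l.map ν : List ℝ) : Multiset ℝ).prod := by
                    rw [Multiset.prod_coe]
                _ = (S.val.map (fun k => ν (A (n - k)))).prod := by rw [h1]
                _ = ∏ ℓ ∈ S, ν (A (n - ℓ)) := rfl
          _ ≤ ∏ ℓ ∈ S, ∏ k ∈ Finset.range j, ν (A k) ^ E k (n - ℓ) := by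
              apply Finset.prod_le_prod (fun ℓ _ => hν0 _)
              intro ℓ hℓ
              have h1 : 1 ≤ ℓ := hpos ℓ hℓ
              exact ih (n - ℓ) (by omega)
          _ = ∏ k ∈ Finset.range j, ∏ ℓ ∈ S, ν (A k) ^ E k (n - ℓ) := Finset.prod_comm
          _ = ∏ k ∈ Finset.range j, ν (A k) ^ (∑ ℓ ∈ S, E k (n - ℓ)) := by
              exact Finset.prod_congr rfl (fun k _ => Finset.prod_pow_eq_pow_sum _ _ _)
          _ = ∏ k ∈ Finset.range j, ν (A k) ^ E k n := by
              apply Finset.prod_congr rfl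
              intro k hk
              rw [Finset.mem_range] at hk
              rw [hE]
              simp only [if_neg (not_lt.2 hn)]
              rw [key n hn k hk]
  intro n hn
  have h := main n
  rw [hE] at h
  simpa only [if_neg (not_lt.2 hn)] using h
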